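/- arXiv:1605.02291 — 4 statements merged into one kernel-verified Lean document; each statement's English description precedes it below -/
import Mathlib

section
/- Let G and H be finite simple graphs, let C = {C₁, …, C_k} be a clique cover of G, and let U ⊆ V(H) be such that there exists u ∈ U with N_H[u] ⊆ U. Then D(G^C ⋆ H^U, x) = Π_{i=1}^k D(H*_i, x), where H*_i is the graph of order |V(H)| + |C_i| obtained from the disjoint union of the complete graph on |C_i| vertices and a copy of H by joining every vertex of the complete graph to every vertex of U. -/
open Polynomial

variable {V W : Type*}

/-- `S` is a dominating set of `G`. -/
def Dominates (G : SimpleGraph V) (S : Finset V) : Prop :=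
  ∀ v, v ∉ S → ∃ u ∈ S, G.Adj u v

open Classical in
/-- The domination polynomial of a finite simple graph. -/
noncomputable def domPoly [Fintype V] (G : SimpleGraph V) : Polynomial ℤ :=
  ∑ S : Finset V, if Dominates G S then (X : Polynomial ℤ) ^ S.card else 0

/-- The clique cover product `G^C ⋆ H^U`. -/
def cliqueCoverProduct (G : SimpleGraph V) (H : SimpleGraph W) {k : ℕ}
    (C : Fin k → Finset V) (U : Set W) : SimpleGraph (V ⊕ Fin k × W) where
  Adj x y :=
    match x, y with
    | Sum.inl a, Sum.inl b => G.Adj a b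
    | Sum.inl a, Sum.inr (i, w) => a ∈ C i ∧ w ∈ U
    | Sum.inr (i, w), Sum.inl a => a ∈ C i ∧ w ∈ U
    | Sum.inr (i, w), Sum.inr (j, w') => i = j ∧ H.Adj w w'
  symm := by
    constructor
    rintro (a | ⟨i, w⟩) (b | ⟨j, w'⟩) h
    · exact G.adj_symm h
    · exact h
    · exact h
    · exact ⟨h.1.symm, H.adj_symm h.2⟩
  loopless := by
    constructor
    rintro (a | ⟨i, w⟩) h
    · exact G.irrefl h
    · exact H.irrefl h.2

/-- `C` is a clique cover of `G`: a partition of the vertices into cliques. -/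
def IsCliqueCover (G : SimpleGraph V) {k : ℕ} (C : Fin k → Finset V) : Prop :=
  (∀ i, (C i).Nonempty) ∧ (∀ v, ∃! i, v ∈ C i) ∧ ∀ i, G.IsClique (C i : Set V)

/-- The graph obtained from `K_m ∪ H` by joining every vertex of `K_m` to every vertex of `U`. -/
def starPiece (H : SimpleGraph W) (U : Set W) (m : ℕ) : SimpleGraph (Fin m ⊕ W) where
  Adj x y :=
    match x, y with
    | Sum.inl a, Sum.inl b => a ≠ b
    | Sum.inl _, Sum.inr w => w ∈ U
    | Sum.inr w, Sum.inl _ => w ∈ U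
    | Sum.inr w, Sum.inr w' => H.Adj w w'
  symm := by
    constructor
    rintro (a | w) (b | w') h
    · exact h.symm
    · exact h
    · exact h
    · exact H.adj_symm h
  loopless := by
    constructor
    rintro (a | w) h
    · exact h rfl
    · exact H.irrefl h

/-! ### Auxiliary material -/

/-- `starPiece` with an arbitrary clique-vertex type. -/
def subPiece (H : SimpleGraph W) (U : Set W) (α : Type*) : SimpleGraph (α ⊕ W) where
  Adj x y :=
    match x, y with
    | Sum.inl a, Sum.inl b => a ≠ b
    | Sum.inl _, Sum.inr w => w ∈ U
    | Sum.inr w, Sum.inl _ => w ∈ U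
    | Sum.inr w, Sum.inr w' => H.Adj w w'
  symm := by
    constructor
    rintro (a | w) (b | w') h
    · exact h.symm
    · exact h
    · exact h
    · exact H.adj_symm h
  loopless := by
    constructor
    rintro (a | w) h
    · exact h rfl
    · exact H.irrefl h

/-- Domination polynomial is invariant under graph isomorphism. -/
lemma domPoly_iso {V' W' : Type*} [Fintype V'] [Fintype W']
    {G : SimpleGraph V'} {G' : SimpleGraph W'} (φ : G ≃g G') :
    domPoly G = domPoly G' := by
  classical
  unfold domPoly
  rw [← Equiv.sum_comp (φ.toEquiv.finsetCongr :
      Finset V' ≃ Finset W')]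
  refine Finset.sum_congr rfl fun S _ => ?_
  have hdom : Dominates G' (φ.toEquiv.finsetCongr S) ↔ Dominates G S := by
    constructor
    · intro h v hv
      have hv' : φ.toEquiv v ∉ φ.toEquiv.finsetCongr S := by
        rw [Equiv.finsetCongr_apply, Finset.mem_map_equiv, Equiv.symm_apply_apply]
        exact hv
      obtain ⟨u', hu', hadj⟩ := h (φ.toEquiv v) hv'
      refine ⟨φ.symm u', ?_, ?_⟩
      · simp only [Equiv.finsetCongr_apply, Finset.mem_map_equiv] at hu'; exact hu'
      · have : G'.Adj (φ (φ.symm u')) (φ v) := by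
          simpa using hadj
        exact φ.map_rel_iff.mp this
    · intro h v' hv'
      have hv : (φ.symm v' : V') ∉ S := by
        simp only [Equiv.finsetCongr_apply, Finset.mem_map_equiv] at hv'
        exact hv'
      obtain ⟨u, hu, hadj⟩ := h _ hv
      refine ⟨φ.toEquiv u, ?_, ?_⟩
      · rw [Equiv.finsetCongr_apply, Finset.mem_map_equiv, Equiv.symm_apply_apply]
        exact hu
      · have := φ.map_rel_iff.mpr hadj
        simpa using this
  rw [Equiv.finsetCongr_apply, Finset.card_map]
  exact (if_congr hdom rfl rfl).symm

open Classical in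
/-- Finsets of a sigma type correspond to tuples of finsets. -/
noncomputable def sigmaFinsetEquiv {ι : Type*} [Fintype ι] {α : ι → Type*}
    [∀ i, Fintype (α i)] : Finset ((i : ι) × α i) ≃ ((i : ι) → Finset (α i)) where
  toFun T i := Finset.univ.filter (fun a => (⟨i, a⟩ : (i : ι) × α i) ∈ T)
  invFun f := Finset.univ.sigma f
  left_inv T := by
    ext ⟨i, a⟩
    simp
  right_inv f := by
    funext i
    ext a
    simp

@[simp] lemma mem_sigmaFinsetEquiv {ι : Type*} [Fintype ι] {α : ι → Type*}
    [∀ i, Fintype (α i)] (T : Finset ((i : ι) × α i)) (i : ι) (a : α i) :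
    a ∈ sigmaFinsetEquiv T i ↔ (⟨i, a⟩ : (i : ι) × α i) ∈ T := by
  simp [sigmaFinsetEquiv]

lemma card_sigmaFinsetEquiv {ι : Type*} [Fintype ι] {α : ι → Type*}
    [∀ i, Fintype (α i)] (T : Finset ((i : ι) × α i)) :
    ∑ i, (sigmaFinsetEquiv T i).card = T.card := by
  classical
  conv_rhs => rw [← sigmaFinsetEquiv.symm_apply_apply T]
  rw [show (sigmaFinsetEquiv.symm (sigmaFinsetEquiv T) : Finset ((i : ι) × α i))
      = Finset.univ.sigma (fun i => sigmaFinsetEquiv T i) from rfl]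
  rw [Finset.card_sigma]

open Classical in
lemma ite_all_eq_prod {ι : Type*} [Fintype ι] (P : ι → Prop) (n : ι → ℕ) :
    (if ∀ i, P i then (X : Polynomial ℤ) ^ (∑ i, n i) else 0)
      = ∏ i, (if P i then (X : Polynomial ℤ) ^ (n i) else 0) := by
  classical
  by_cases h : ∀ i, P i
  · rw [if_pos h, ← Finset.prod_pow_eq_pow_sum]
    exact Finset.prod_congr rfl fun i _ => (if_pos (h i)).symm
  · rw [if_neg h]
    push_neg at h
    obtain ⟨i, hi⟩ := h
    exact (Finset.prod_eq_zero (Finset.mem_univ i)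
      (if_neg hi : (if P i then (X : Polynomial ℤ) ^ (n i) else 0) = 0)).symm

/-- The relabelling equivalence induced by a clique cover. -/
def blockEquiv {k : ℕ} (C : Fin k → Finset V) (idx : V → Fin k)
    (hidx : ∀ v, v ∈ C (idx v)) (huniq : ∀ v j, v ∈ C j → j = idx v) :
    (V ⊕ Fin k × W) ≃ (i : Fin k) × (↥(C i) ⊕ W) where
  toFun x :=
    match x with
    | Sum.inl v => ⟨idx v, Sum.inl ⟨v, hidx v⟩⟩
    | Sum.inr (i, w) => ⟨i, Sum.inr w⟩
  invFun x :=
    match x with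
    | ⟨_, Sum.inl c⟩ => Sum.inl ↑c
    | ⟨i, Sum.inr w⟩ => Sum.inr (i, w)
  left_inv := by rintro (v | ⟨i, w⟩) <;> rfl
  right_inv := by
    rintro ⟨i, c | w⟩
    · obtain ⟨v, hv⟩ := c
      have h := huniq v i hv
      subst h
      rfl
    · rfl

set_option maxHeartbeats 1000000 in
/-- The domination polynomial of the clique cover product `G^C ⋆ H^U`,
assuming some `u ∈ U` has its closed neighbourhood inside `U`. -/
theorem domPoly_cliqueCoverProduct {V W : Type*} [Fintype V] [Fintype W]
    (G : SimpleGraph V) (H : SimpleGraph W) {k : ℕ} (C : Fin k → Finset V)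
    (hC : IsCliqueCover G C) (U : Set W)
    (hU : ∃ u ∈ U, ∀ w, H.Adj u w → w ∈ U) :
    domPoly (cliqueCoverProduct G H C U) =
      ∏ i : Fin k, domPoly (starPiece H U (C i).card) := by
  classical
  obtain ⟨u, huU, huN⟩ := hU
  obtain ⟨-, hpart, hclq⟩ := hC
  have hpart' : ∀ v, ∃ i, v ∈ C i ∧ ∀ j, v ∈ C j → j = i := hpart
  choose idx hidx huniq using hpart'
  set eb : (V ⊕ Fin k × W) ≃ (i : Fin k) × (↥(C i) ⊕ W) :=
    blockEquiv C idx hidx (fun v j h => huniq v j h) with heb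
  set big := cliqueCoverProduct G H C U with hbig
  set bigS : SimpleGraph ((i : Fin k) × (↥(C i) ⊕ W)) := big.comap ⇑eb.symm with hbigS
  -- iso between big and bigS
  have iso : big ≃g bigS :=
    { toEquiv := eb
      map_rel_iff' := by
        intro a b
        show big.Adj (eb.symm (eb a)) (eb.symm (eb b)) ↔ big.Adj a b
        rw [eb.symm_apply_apply, eb.symm_apply_apply] }
  -- symm computation lemmas
  have hsl : ∀ (i : Fin k) (c : ↥(C i)), eb.symm ⟨i, Sum.inl c⟩ = Sum.inl (↑c : V) :=
    fun _ _ => rfl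
  have hsr : ∀ (i : Fin k) (w : W), eb.symm ⟨i, Sum.inr w⟩ = Sum.inr (i, w) :=
    fun _ _ => rfl
  -- the key decomposition of domination
  have key : ∀ T : Finset ((i : Fin k) × (↥(C i) ⊕ W)),
      Dominates bigS T ↔ ∀ i, Dominates (subPiece H U ↥(C i)) (sigmaFinsetEquiv T i) := by
    intro T
    constructor
    · intro hT i
      -- first, a dominator of the clique exists inside block i
      have claim : (∃ b : ↥(C i), (⟨i, Sum.inl b⟩ : (i : Fin k) × (↥(C i) ⊕ W)) ∈ T) ∨
          (∃ w ∈ U, (⟨i, Sum.inr w⟩ : (i : Fin k) × (↥(C i) ⊕ W)) ∈ T) := by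
        by_cases hmem : (⟨i, Sum.inr u⟩ : (i : Fin k) × (↥(C i) ⊕ W)) ∈ T
        · exact Or.inr ⟨u, huU, hmem⟩
        · obtain ⟨d, hd, hadj⟩ := hT _ hmem
          obtain ⟨j, (c | w)⟩ := d
          · -- adjacency: inl ↑c to inr (i, u) : ↑c ∈ C i ∧ u ∈ U
            have : big.Adj (Sum.inl (↑c : V)) (Sum.inr (i, u)) := hadj
            have hc : (↑c : V) ∈ C i := this.1
            have hji : j = i := huniq _ _ c.2 ▸ huniq _ _ hc ▸ rfl
            subst hji
            exact Or.inl ⟨c, hd⟩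
          · have : big.Adj (Sum.inr (j, w)) (Sum.inr (i, u)) := hadj
            obtain ⟨hji, haw⟩ := this
            subst hji
            exact Or.inr ⟨w, huN w (H.adj_symm haw), hd⟩
      rintro (a | w) hx
      · -- a clique vertex of block i
        rcases claim with ⟨b, hb⟩ | ⟨w, hwU, hw⟩
        · have hba : b ≠ a := by
            rintro rfl
            exact hx ((mem_sigmaFinsetEquiv T i _).mpr hb)
          exact ⟨Sum.inl b, (mem_sigmaFinsetEquiv T i _).mpr hb, hba⟩
        · exact ⟨Sum.inr w, (mem_sigmaFinsetEquiv T i _).mpr hw, hwU⟩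
      · -- a copy vertex of block i
        have hx' : (⟨i, Sum.inr w⟩ : (i : Fin k) × (↥(C i) ⊕ W)) ∉ T := by
          intro h
          exact hx ((mem_sigmaFinsetEquiv T i _).mpr h)
        obtain ⟨d, hd, hadj⟩ := hT _ hx'
        obtain ⟨j, (c | w')⟩ := d
        · have : big.Adj (Sum.inl (↑c : V)) (Sum.inr (i, w)) := hadj
          have hji : j = i := huniq _ _ c.2 ▸ huniq _ _ this.1 ▸ rfl
          subst hji
          exact ⟨Sum.inl c, (mem_sigmaFinsetEquiv T _ _).mpr hd, this.2⟩
        · have : big.Adj (Sum.inr (j, w')) (Sum.inr (i, w)) := hadj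
          obtain ⟨hji, haw⟩ := this
          subst hji
          exact ⟨Sum.inr w', (mem_sigmaFinsetEquiv T _ _).mpr hd, haw⟩
    · intro h
      rintro ⟨i, (a | w)⟩ hx
      · have hx' : Sum.inl a ∉ sigmaFinsetEquiv T i := by
          intro hmem
          exact hx ((mem_sigmaFinsetEquiv T i _).mp hmem)
        obtain ⟨d, hd, hadj⟩ := h i _ hx'
        obtain (b | w') := d
        · refine ⟨⟨i, Sum.inl b⟩, (mem_sigmaFinsetEquiv T i _).mp hd, ?_⟩
          show big.Adj (Sum.inl (↑b : V)) (Sum.inl (↑a : V))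
          have hba : b ≠ a := hadj
          have : (↑b : V) ≠ ↑a := fun hh => hba (Subtype.ext hh)
          exact hclq i b.2 a.2 this
        · refine ⟨⟨i, Sum.inr w'⟩, (mem_sigmaFinsetEquiv T i _).mp hd, ?_⟩
          show big.Adj (Sum.inr (i, w')) (Sum.inl (↑a : V))
          exact ⟨a.2, hadj⟩
      · have hx' : Sum.inr w ∉ sigmaFinsetEquiv T i := by
          intro hmem
          exact hx ((mem_sigmaFinsetEquiv T i _).mp hmem)
        obtain ⟨d, hd, hadj⟩ := h i _ hx'
        obtain (b | w') := d
        · refine ⟨⟨i, Sum.inl b⟩, (mem_sigmaFinsetEquiv T i _).mp hd, ?_⟩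
          show big.Adj (Sum.inl (↑b : V)) (Sum.inr (i, w))
          exact ⟨b.2, hadj⟩
        · refine ⟨⟨i, Sum.inr w'⟩, (mem_sigmaFinsetEquiv T i _).mp hd, ?_⟩
          show big.Adj (Sum.inr (i, w')) (Sum.inr (i, w))
          exact ⟨rfl, hadj⟩
  -- now compute
  calc domPoly big = domPoly bigS := domPoly_iso iso
    _ = ∑ T : Finset ((i : Fin k) × (↥(C i) ⊕ W)),
          ∏ i, (if Dominates (subPiece H U ↥(C i)) (sigmaFinsetEquiv T i)
            then (X : Polynomial ℤ) ^ (sigmaFinsetEquiv T i).card else 0) := by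
        unfold domPoly
        refine Finset.sum_congr rfl fun T _ => ?_
        rw [← card_sigmaFinsetEquiv T, ← ite_all_eq_prod]
        simp only [key T]
        congr!
    _ = ∑ f : (i : Fin k) → Finset (↥(C i) ⊕ W),
          ∏ i, (if Dominates (subPiece H U ↥(C i)) (f i)
            then (X : Polynomial ℤ) ^ (f i).card else 0) :=
        Equiv.sum_comp (sigmaFinsetEquiv :
            Finset ((i : Fin k) × (↥(C i) ⊕ W)) ≃ ((i : Fin k) → Finset (↥(C i) ⊕ W)))
          (fun f => ∏ i, (if Dominates (subPiece H U ↥(C i)) (f i)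
            then (X : Polynomial ℤ) ^ (f i).card else 0))
    _ = ∏ i, ∑ Ti : Finset (↥(C i) ⊕ W),
          (if Dominates (subPiece H U ↥(C i)) Ti
            then (X : Polynomial ℤ) ^ Ti.card else 0) := by
        rw [Finset.prod_univ_sum, Fintype.piFinset_univ]
    _ = ∏ i, domPoly (subPiece H U ↥(C i)) := by
        refine Finset.prod_congr rfl fun i _ => ?_
        unfold domPoly
        refine Finset.sum_congr rfl fun Ti _ => if_congr Iff.rfl rfl rfl
    _ = ∏ i : Fin k, domPoly (starPiece H U (C i).card) := by
        refine Finset.prod_congr rfl fun i _ => ?_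
        refine domPoly_iso ⟨Equiv.sumCongr (C i).equivFin (Equiv.refl W), ?_⟩
        rintro (a | w) (b | w')
        · show ((C i).equivFin a ≠ (C i).equivFin b) ↔ (a ≠ b)
          simp
        · exact Iff.rfl
        · exact Iff.rfl
        · exact Iff.rfl
end

section
/- Let G be a finite simple graph with clique cover C = {C₁, …, C_m} where |C_i| = k_i, and let H be the edgeless graph on s ≥ 1 vertices. Then the clique cover product G^C ⋆ H and the disjoint union of the k_i-stars S_{k₁,s} ∪ S_{k₂,s} ∪ … ∪ S_{k_m,s} have the same domination polynomial. -/
open Polynomial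

variable {V W : Type*}

/-- The join of two graphs on disjoint vertex sets. -/
def graphJoin (G : SimpleGraph V) (H : SimpleGraph W) : SimpleGraph (V ⊕ W) where
  Adj x y :=
    match x, y with
    | Sum.inl a, Sum.inl b => G.Adj a b
    | Sum.inr a, Sum.inr b => H.Adj a b
    | _, _ => True
  symm := by
    constructor
    rintro (a | a) (b | b) h
    · exact G.adj_symm h
    · trivial
    · trivial
    · exact H.adj_symm h
  loopless := by
    constructor
    rintro (a | a) h
    · exact G.irrefl h
    · exact H.irrefl h

/-- The `k`-star `S_{k,s}`: the join of `K_k` with the edgeless graph on `s` vertices. -/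
def kstar (k s : ℕ) : SimpleGraph (Fin k ⊕ Fin s) :=
  graphJoin (⊤ : SimpleGraph (Fin k)) (⊥ : SimpleGraph (Fin s))

/-- Disjoint union of an indexed family of graphs. -/
def sigmaGraph {ι : Type*} {V : ι → Type*} (G : ∀ i, SimpleGraph (V i)) :
    SimpleGraph (Σ i, V i) where
  Adj x y := ∃ (i : ι) (a b : V i), (G i).Adj a b ∧ x = ⟨i, a⟩ ∧ y = ⟨i, b⟩
  symm := by
    constructor
    rintro _ _ ⟨i, a, b, hadj, rfl, rfl⟩
    exact ⟨i, b, a, (G i).adj_symm hadj, rfl, rfl⟩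
  loopless := by
    constructor
    rintro ⟨i, a⟩ ⟨j, c, d, hadj, h1, h2⟩
    obtain rfl : c = d := by
      have := h1.symm.trans h2
      simpa using this
    exact (G j).irrefl hadj

section Aux

variable {V : Type*} {m : ℕ}

/-- A Finset is equivalent to `Fin` of its card. -/
noncomputable def finsetEquivFin (t : Finset V) : t ≃ Fin t.card :=
  Fintype.equivFinOfCardEq (Fintype.card_coe t)

/-- Characterization of dominating sets of the clique cover product with an
edgeless graph. -/
lemma dominates_ccp_iff (G : SimpleGraph V) (C : Fin m → Finset V)
    (hC : IsCliqueCover G C) {s : ℕ} (hs : 1 ≤ s) (S : Finset (V ⊕ Fin m × Fin s)) :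
    Dominates (cliqueCoverProduct G (⊥ : SimpleGraph (Fin s)) C Set.univ) S ↔
      ∀ i, (∃ a ∈ C i, Sum.inl a ∈ S) ∨ (∀ w : Fin s, Sum.inr (i, w) ∈ S) := by
  constructor
  · intro hdom i
    by_cases hR : ∀ w : Fin s, Sum.inr (i, w) ∈ S
    · exact Or.inr hR
    · push_neg at hR
      obtain ⟨w, hw⟩ := hR
      obtain ⟨u, huS, hadj⟩ := hdom _ hw
      left
      match u with
      | Sum.inl a => exact ⟨a, hadj.1, huS⟩
      | Sum.inr (j, w') => exact absurd hadj.2 (by simp)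
  · intro h x hx
    match x with
    | Sum.inl v =>
      obtain ⟨i, hvi, _⟩ := hC.2.1 v
      rcases h i with ⟨a, haC, haS⟩ | hall
      · refine ⟨Sum.inl a, haS, ?_⟩
        have hav : a ≠ v := by rintro rfl; exact hx haS
        exact hC.2.2 i haC hvi hav
      · exact ⟨Sum.inr (i, ⟨0, hs⟩), hall _, ⟨hvi, trivial⟩⟩
    | Sum.inr (i, w) =>
      rcases h i with ⟨a, haC, haS⟩ | hall
      · exact ⟨Sum.inl a, haS, ⟨haC, trivial⟩⟩
      · exact absurd (hall w) hx

/-- Characterization of dominating sets of a disjoint union of stars. -/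
lemma dominates_sigma_star_iff {k : Fin m → ℕ} {s : ℕ} (hs : 1 ≤ s)
    (T : Finset (Σ i : Fin m, Fin (k i) ⊕ Fin s)) :
    Dominates (sigmaGraph fun i => kstar (k i) s) T ↔
      ∀ i, (∃ a : Fin (k i), (⟨i, Sum.inl a⟩ : Σ i, Fin (k i) ⊕ Fin s) ∈ T) ∨
        (∀ w : Fin s, (⟨i, Sum.inr w⟩ : Σ i, Fin (k i) ⊕ Fin s) ∈ T) := by
  constructor
  · intro hdom i
    by_cases hR : ∀ w : Fin s, (⟨i, Sum.inr w⟩ : Σ i, Fin (k i) ⊕ Fin s) ∈ T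
    · exact Or.inr hR
    · push_neg at hR
      obtain ⟨w, hw⟩ := hR
      obtain ⟨u, huT, j, a, b, hadj, rfl, hx⟩ := hdom _ hw
      obtain ⟨rfl, hb⟩ := Sigma.mk.inj_iff.mp hx
      obtain rfl : b = Sum.inr w := hb.symm.eq
      match a with
      | Sum.inl a' => exact Or.inl ⟨a', huT⟩
      | Sum.inr w' => exact absurd hadj (by simp [kstar, graphJoin])
  · intro h x hx
    obtain ⟨i, y⟩ := x
    match y with
    | Sum.inl a =>
      rcases h i with ⟨a', ha'⟩ | hall
      · by_cases hne : a' = a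
        · exact absurd ha' (hne ▸ hx)
        · exact ⟨⟨i, Sum.inl a'⟩, ha', i, Sum.inl a', Sum.inl a, hne, rfl, rfl⟩
      · exact ⟨⟨i, Sum.inr ⟨0, hs⟩⟩, hall _, i, Sum.inr ⟨0, hs⟩, Sum.inl a, trivial, rfl, rfl⟩
    | Sum.inr w =>
      rcases h i with ⟨a', ha'⟩ | hall
      · exact ⟨⟨i, Sum.inl a'⟩, ha', i, Sum.inl a', Sum.inr w, trivial, rfl, rfl⟩
      · exact absurd (hall w) hx

/-- The vertex bijection between the clique cover product and the sigma of stars. -/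
noncomputable def cliqueEquiv (C : Fin m → Finset V) (hu : ∀ v, ∃! i, v ∈ C i) (s : ℕ) :
    (V ⊕ Fin m × Fin s) ≃ (Σ i : Fin m, Fin (C i).card ⊕ Fin s) :=
  letI f : (V ⊕ Fin m × Fin s) → (Σ i : Fin m, Fin (C i).card ⊕ Fin s) := fun x =>
    match x with
    | Sum.inl v => ⟨(hu v).choose,
        Sum.inl (finsetEquivFin (C ((hu v).choose)) ⟨v, (hu v).choose_spec.1⟩)⟩
    | Sum.inr (i, w) => ⟨i, Sum.inr w⟩
  letI g : (Σ i : Fin m, Fin (C i).card ⊕ Fin s) → (V ⊕ Fin m × Fin s) := fun x =>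
    match x with
    | ⟨i, Sum.inl a⟩ => Sum.inl (((finsetEquivFin (C i)).symm a : C i) : V)
    | ⟨i, Sum.inr w⟩ => Sum.inr (i, w)
  have hgf : ∀ x, g (f x) = x := by
    rintro (v | ⟨i, w⟩)
    · simp [f, g]
    · rfl
  have hginj : Function.Injective g := by
    rintro ⟨i, (a | w)⟩ ⟨j, (b | w')⟩ h
    · simp only [g, Sum.inl.injEq] at h
      obtain rfl : i = j := by
        refine (hu (((finsetEquivFin (C i)).symm a : C i) : V)).unique
          ((finsetEquivFin (C i)).symm a).2 ?_
        rw [h]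
        exact ((finsetEquivFin (C j)).symm b).2
      obtain rfl : a = b := (finsetEquivFin (C i)).symm.injective (Subtype.ext h)
      rfl
    · simp [g] at h
    · simp [g] at h
    · simp only [g, Sum.inr.injEq, Prod.mk.injEq] at h
      obtain ⟨rfl, rfl⟩ := h
      rfl
  ⟨f, g, hgf, fun x => hginj (hgf (g x))⟩

end Aux

/-- If `H` is the edgeless graph on `s ≥ 1` vertices, then `G^C ⋆ H`
and the disjoint union of the stars `S_{k_i,s}` have the same domination polynomial. -/
theorem domPoly_cliqueCoverProduct_empty {V : Type*} [Fintype V] (G : SimpleGraph V)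
    {m : ℕ} (C : Fin m → Finset V) (hC : IsCliqueCover G C) (s : ℕ) (hs : 1 ≤ s) :
    domPoly (cliqueCoverProduct G (⊥ : SimpleGraph (Fin s)) C Set.univ) =
      domPoly (sigmaGraph fun i : Fin m => kstar (C i).card s) := by
  classical
  let e := cliqueEquiv C hC.2.1 s
  have hmemK : ∀ (S : Finset (V ⊕ Fin m × Fin s)) (i : Fin m),
      ((∃ a : Fin (C i).card,
        (⟨i, Sum.inl a⟩ : Σ i : Fin m, Fin (C i).card ⊕ Fin s) ∈ e.finsetCongr S) ↔
        ∃ v ∈ C i, Sum.inl v ∈ S) := by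
    intro S i
    constructor
    · rintro ⟨a, ha⟩
      rw [Equiv.finsetCongr_apply, Finset.mem_map_equiv] at ha
      exact ⟨_, ((finsetEquivFin (C i)).symm a).2, ha⟩
    · rintro ⟨v, hv, hvS⟩
      refine ⟨finsetEquivFin (C i) ⟨v, hv⟩, ?_⟩
      rw [Equiv.finsetCongr_apply, Finset.mem_map_equiv]
      show Sum.inl (((finsetEquivFin (C i)).symm (finsetEquivFin (C i) ⟨v, hv⟩) : C i) : V) ∈ S
      rw [Equiv.symm_apply_apply]
      exact hvS
  have hmemE : ∀ (S : Finset (V ⊕ Fin m × Fin s)) (i : Fin m) (w : Fin s),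
      ((⟨i, Sum.inr w⟩ : Σ i : Fin m, Fin (C i).card ⊕ Fin s) ∈ e.finsetCongr S ↔
        Sum.inr (i, w) ∈ S) := by
    intro S i w
    rw [Equiv.finsetCongr_apply, Finset.mem_map_equiv]
    exact Iff.rfl
  unfold domPoly
  refine Fintype.sum_equiv e.finsetCongr _ _ fun S => ?_
  have hiff : Dominates (cliqueCoverProduct G (⊥ : SimpleGraph (Fin s)) C Set.univ) S ↔
      Dominates (sigmaGraph fun i : Fin m => kstar (C i).card s) (e.finsetCongr S) := by
    rw [dominates_ccp_iff G C hC hs, dominates_sigma_star_iff hs]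
    refine forall_congr' fun i => or_congr ?_ ?_
    · rw [hmemK S i]
    · exact forall_congr' fun w => (hmemE S i w).symm
  have hcard : (e.finsetCongr S).card = S.card := Finset.card_map _
  by_cases h : Dominates (cliqueCoverProduct G (⊥ : SimpleGraph (Fin s)) C Set.univ) S
  · rw [if_pos h, if_pos (hiff.mp h), hcard]
  · rw [if_neg h, if_neg (fun hh => h (hiff.mpr hh))]
end

section
/- Let k ≥ 2, n > k, and let G be a finite simple graph of order m ≥ 1. Then the corona G ∘ S_{k−1,n−k} and the disjoint union of m copies of S_{k,n−k} have the same domination polynomial, i.e., D(G ∘ S_{k−1,n−k}, x) = (D(S_{k,n−k}, x))^m. -/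
open Polynomial

variable {V W : Type*}

/-- The corona `G ∘ H`. -/
def corona (G : SimpleGraph V) (H : SimpleGraph W) : SimpleGraph (V ⊕ V × W) where
  Adj x y :=
    match x, y with
    | Sum.inl a, Sum.inl b => G.Adj a b
    | Sum.inl a, Sum.inr (b, _) => a = b
    | Sum.inr (b, _), Sum.inl a => a = b
    | Sum.inr (a, w), Sum.inr (b, w') => a = b ∧ H.Adj w w'
  symm := by
    constructor
    rintro (a | ⟨a, w⟩) (b | ⟨b, w'⟩) h
    · exact G.adj_symm h
    · exact h
    · exact h
    · exact ⟨h.1.symm, H.adj_symm h.2⟩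
  loopless := by
    constructor
    rintro (a | ⟨a, w⟩) h
    · exact G.irrefl h
    · exact H.irrefl h.2

/-! ### Auxiliary material -/

open Classical

/-- domPoly is invariant under graph isomorphism. -/
lemma domPoly_congr {V W : Type*} [Fintype V] [Fintype W] (e : V ≃ W)
    (G : SimpleGraph V) (G' : SimpleGraph W)
    (h : ∀ a b, G.Adj a b ↔ G'.Adj (e a) (e b)) : domPoly G = domPoly G' := by
  unfold domPoly
  refine Fintype.sum_equiv e.finsetCongr _ _ ?_
  intro S
  have hmem : ∀ x : W, x ∈ e.finsetCongr S ↔ e.symm x ∈ S := by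
    intro x
    simp [Equiv.finsetCongr, Finset.mem_map]
  have hdom : Dominates G S ↔ Dominates G' (e.finsetCongr S) := by
    constructor
    · intro hd x hx
      rw [hmem] at hx
      obtain ⟨u, hu, hadj⟩ := hd (e.symm x) hx
      refine ⟨e u, by rw [hmem]; simpa using hu, ?_⟩
      have := (h u (e.symm x)).mp hadj
      simpa using this
    · intro hd x hx
      obtain ⟨u, hu, hadj⟩ := hd (e x) (by rw [hmem]; simpa using hx)
      refine ⟨e.symm u, by rw [hmem] at hu; simpa using hu, ?_⟩
      have := (h (e.symm u) x).mpr
      simp only [Equiv.apply_symm_apply] at this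
      exact this hadj
  have hcard : (e.finsetCongr S).card = S.card := by
    simp [Equiv.finsetCongr]
  rw [hcard]
  by_cases hD : Dominates G S
  · rw [if_pos hD, if_pos (hdom.mp hD)]
  · rw [if_neg hD, if_neg (fun hc => hD (hdom.mpr hc))]

/-- The cone over a graph: one apex joined to everything. -/
def coneGraph (H : SimpleGraph W) : SimpleGraph (Unit ⊕ W) :=
  graphJoin (⊤ : SimpleGraph Unit) H

/-- Slices of a subset of the corona vertex set. -/
noncomputable def sliceEquiv (V W : Type*) [Fintype V] [Fintype W] :
    Finset (V ⊕ V × W) ≃ (V → Finset (Unit ⊕ W)) where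
  toFun S v := Finset.univ.filter fun a =>
    Sum.elim (fun _ => Sum.inl v ∈ S) (fun w => Sum.inr (v, w) ∈ S) a
  invFun g := Finset.univ.filter fun x =>
    Sum.elim (fun v => Sum.inl () ∈ g v) (fun p => Sum.inr p.2 ∈ g p.1) x
  left_inv S := by ext x; rcases x with v | ⟨v, w⟩ <;> simp
  right_inv g := by funext v; ext a; rcases a with ⟨⟩ | w <;> simp

lemma mem_slice_inl {V W : Type*} [Fintype V] [Fintype W] (S : Finset (V ⊕ V × W)) (v : V) :
    Sum.inl () ∈ sliceEquiv V W S v ↔ Sum.inl v ∈ S := by simp [sliceEquiv]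

lemma mem_slice_inr {V W : Type*} [Fintype V] [Fintype W] (S : Finset (V ⊕ V × W)) (v : V) (w : W) :
    Sum.inr w ∈ sliceEquiv V W S v ↔ Sum.inr (v, w) ∈ S := by simp [sliceEquiv]

lemma card_slice {V W : Type*} [Fintype V] [Fintype W] (S : Finset (V ⊕ V × W)) :
    S.card = ∑ v, (sliceEquiv V W S v).card := by
  have hS : S.card = ∑ x : V ⊕ V × W, if x ∈ S then 1 else 0 := by
    rw [← Finset.card_filter]
    congr 1
    ext x; simp
  have hslice : ∀ v, (sliceEquiv V W S v).card =
      (if Sum.inl v ∈ S then 1 else 0) + ∑ w : W, (if Sum.inr (v, w) ∈ S then 1 else 0) := by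
    intro v
    simp only [sliceEquiv, Equiv.coe_fn_mk]
    rw [Finset.card_filter]
    rw [Fintype.sum_sum_type]
    simp
    rw [Finset.card_filter]
    congr! <;> (funext a b; split_ifs <;> simp_all)
  rw [hS, Fintype.sum_sum_type, Fintype.sum_prod_type]
  simp only [hslice]
  rw [Finset.sum_add_distrib]

lemma dominates_corona_iff {V W : Type*} [Fintype V] [Fintype W] [Nonempty W]
    (G : SimpleGraph V) (H : SimpleGraph W) (S : Finset (V ⊕ V × W)) :
    Dominates (corona G H) S ↔ ∀ v, Dominates (coneGraph H) (sliceEquiv V W S v) := by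
  constructor
  · intro hd v a ha
    rcases a with ⟨⟩ | w
    · rw [mem_slice_inl] at ha
      obtain ⟨w0⟩ := ‹Nonempty W›
      by_cases hw0 : Sum.inr (v, w0) ∈ S
      · exact ⟨Sum.inr w0, (mem_slice_inr S _ _).mpr hw0, trivial⟩
      · obtain ⟨u, hu, hadj⟩ := hd (Sum.inr (v, w0)) hw0
        rcases u with b | ⟨b, w'⟩
        · obtain rfl : b = v := hadj
          exact absurd hu ha
        · obtain ⟨rfl, hH⟩ : b = v ∧ H.Adj w' w0 := hadj
          exact ⟨Sum.inr w', (mem_slice_inr S _ _).mpr hu, trivial⟩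
    · rw [mem_slice_inr] at ha
      obtain ⟨u, hu, hadj⟩ := hd (Sum.inr (v, w)) ha
      rcases u with b | ⟨b, w'⟩
      · obtain rfl : b = v := hadj
        exact ⟨Sum.inl (), (mem_slice_inl S _).mpr hu, trivial⟩
      · obtain ⟨rfl, hH⟩ : b = v ∧ H.Adj w' w := hadj
        exact ⟨Sum.inr w', (mem_slice_inr S _ _).mpr hu, hH⟩
  · intro hd x hx
    rcases x with v | ⟨v, w⟩
    · have h1 : Sum.inl () ∉ sliceEquiv V W S v := by rw [mem_slice_inl]; exact hx
      obtain ⟨u, hu, hadj⟩ := hd v _ h1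
      rcases u with ⟨⟩ | w'
      · exact absurd hu h1
      · exact ⟨Sum.inr (v, w'), (mem_slice_inr S _ _).mp hu, rfl⟩
    · have h1 : Sum.inr w ∉ sliceEquiv V W S v := by rw [mem_slice_inr]; exact hx
      obtain ⟨u, hu, hadj⟩ := hd v _ h1
      rcases u with ⟨⟩ | w'
      · exact ⟨Sum.inl v, (mem_slice_inl S _).mp hu, rfl⟩
      · exact ⟨Sum.inr (v, w'), (mem_slice_inr S _ _).mp hu, ⟨rfl, hadj⟩⟩

lemma prod_ite_pow {V : Type*} [Fintype V] (P : V → Prop) (c : V → ℕ) :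
    (∏ v, if P v then (X : Polynomial ℤ) ^ (c v) else 0) =
      if (∀ v, P v) then (X : Polynomial ℤ) ^ (∑ v, c v) else 0 := by
  by_cases h : ∀ v, P v
  · rw [if_pos h]
    rw [← Finset.prod_pow_eq_pow_sum]
    exact Finset.prod_congr rfl fun v _ => if_pos (h v)
  · rw [if_neg h]
    push_neg at h
    obtain ⟨v, hv⟩ := h
    exact Finset.prod_eq_zero (Finset.mem_univ v) (if_neg hv)

/-- The key product formula. -/
lemma domPoly_corona {V W : Type*} [Fintype V] [Fintype W] [Nonempty W]
    (G : SimpleGraph V) (H : SimpleGraph W) :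
    domPoly (corona G H) = domPoly (coneGraph H) ^ Fintype.card V := by
  have : domPoly (coneGraph H) ^ Fintype.card V = ∏ _v : V, domPoly (coneGraph H) := by
    rw [Finset.prod_const, Finset.card_univ]
  rw [this]
  unfold domPoly
  rw [Finset.prod_univ_sum]
  rw [Fintype.piFinset_univ]
  refine Fintype.sum_equiv (sliceEquiv V W) _ _ ?_
  intro S
  rw [prod_ite_pow]
  have hdom := dominates_corona_iff G H S
  have hcard := card_slice S
  by_cases hD : Dominates (corona G H) S
  · rw [if_pos hD, if_pos (hdom.mp hD), hcard]
  · rw [if_neg hD, if_neg (fun hc => hD (hdom.mpr hc))]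

/-- Cone over `S_{k-1,s}` is `S_{k,s}`. -/
lemma domPoly_cone_kstar (k s : ℕ) (hk : 1 ≤ k) :
    domPoly (coneGraph (kstar (k - 1) s)) = domPoly (kstar k s) := by
  have hke : 1 + (k - 1) = k := by omega
  let e1 : Unit ⊕ Fin (k - 1) ≃ Fin k :=
    ((Equiv.sumCongr finOneEquiv.symm (Equiv.refl (Fin (k - 1)))).trans
      (finSumFinEquiv.trans (finCongr hke)))
  let e : Unit ⊕ (Fin (k - 1) ⊕ Fin s) ≃ Fin k ⊕ Fin s :=
    (Equiv.sumAssoc Unit (Fin (k - 1)) (Fin s)).symm.trans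
      (Equiv.sumCongr e1 (Equiv.refl (Fin s)))
  have hright : ∀ x : Unit ⊕ (Fin (k - 1) ⊕ Fin s),
      (e x).isRight = (Sum.elim (fun _ => false) Sum.isRight x) := by
    rintro (⟨⟩ | (a | b)) <;> simp [e, e1, Equiv.sumAssoc]
  have hA : ∀ x y : Fin k ⊕ Fin s, (kstar k s).Adj x y ↔ x ≠ y ∧ ¬(x.isRight ∧ y.isRight) := by
    rintro (a | a) (b | b) <;>
      simp [kstar, graphJoin, SimpleGraph.top_adj]
  have hB : ∀ x y : Unit ⊕ (Fin (k - 1) ⊕ Fin s),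
      (coneGraph (kstar (k - 1) s)).Adj x y ↔
      x ≠ y ∧ ¬((Sum.elim (fun _ => false) Sum.isRight x : Bool) ∧
        (Sum.elim (fun _ => false) Sum.isRight y : Bool)) := by
    rintro (⟨⟩ | (a | a)) (⟨⟩ | (b | b)) <;>
      simp [coneGraph, kstar, graphJoin, SimpleGraph.top_adj]
  refine domPoly_congr e _ _ ?_
  intro a b
  rw [hA, hB, ← hright, ← hright]
  constructor
  · rintro ⟨hne, hr⟩
    exact ⟨fun hc => hne (e.injective hc), hr⟩
  · rintro ⟨hne, hr⟩
    exact ⟨fun hc => hne (by rw [hc]), hr⟩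

/-- `G ∘ S_{k−1,n−k}` and the disjoint union of `|V(G)|` copies of
`S_{k,n−k}` have the same domination polynomial. -/
theorem domPoly_corona_kstar {V : Type*} [Fintype V] (G : SimpleGraph V)
    (k n : ℕ) (hk : 2 ≤ k) (hn : k < n) (hm : 1 ≤ Fintype.card V) :
    domPoly (corona G (kstar (k - 1) (n - k))) =
      domPoly (kstar k (n - k)) ^ Fintype.card V := by
  have hne : Nonempty (Fin (k - 1) ⊕ Fin (n - k)) :=
    ⟨Sum.inl ⟨0, by omega⟩⟩
  rw [domPoly_corona G (kstar (k - 1) (n - k)),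
    domPoly_cone_kstar k (n - k) (by omega)]
end

section
/- For every natural number n ≥ 1, the domination polynomial of the friendship graph satisfies D(F_n, x) = (2x + x²)^n + x(1 + x)^{2n}. -/
open Polynomial

variable {V W : Type*}

/-- `n` disjoint copies of `K₂`. -/
def nK2 (n : ℕ) : SimpleGraph (Fin n × Fin 2) where
  Adj x y := x.1 = y.1 ∧ x.2 ≠ y.2
  symm := by constructor; rintro ⟨i, a⟩ ⟨j, b⟩ ⟨h1, h2⟩; exact ⟨h1.symm, h2.symm⟩
  loopless := by constructor; rintro ⟨i, a⟩ ⟨_, h⟩; exact h rfl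

/-- The friendship graph `F_n = K₁ + nK₂`. -/
def friendship (n : ℕ) : SimpleGraph (Fin 1 ⊕ Fin n × Fin 2) :=
  graphJoin (⊤ : SimpleGraph (Fin 1)) (nK2 n)

open Finset

/-- Finsets of a sum type correspond to pairs of finsets. -/
def finsetSumEquiv {α β : Type*} : Finset α × Finset β ≃ Finset (α ⊕ β) where
  toFun p := p.1.disjSum p.2
  invFun S := (S.toLeft, S.toRight)
  left_inv := by rintro ⟨A, B⟩; simp
  right_inv S := Finset.toLeft_disjSum_toRight

/-- Finsets of `ι × Fin 2` correspond to functions `ι → Finset (Fin 2)`. -/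
def finsetProdEquiv (ι : Type*) [Fintype ι] [DecidableEq ι] :
    (ι → Finset (Fin 2)) ≃ Finset (ι × Fin 2) where
  toFun f := univ.filter fun p => p.2 ∈ f p.1
  invFun S i := univ.filter fun b => (i, b) ∈ S
  left_inv f := by ext i b; simp
  right_inv S := by ext ⟨i, b⟩; simp

lemma mem_finsetProdEquiv {ι : Type*} [Fintype ι] [DecidableEq ι]
    (f : ι → Finset (Fin 2)) (i : ι) (b : Fin 2) :
    (i, b) ∈ finsetProdEquiv ι f ↔ b ∈ f i := by
  simp [finsetProdEquiv]

lemma card_finsetProdEquiv {ι : Type*} [Fintype ι] [DecidableEq ι]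
    (f : ι → Finset (Fin 2)) :
    (finsetProdEquiv ι f).card = ∑ i, (f i).card := by
  rw [finsetProdEquiv]
  simp only [Equiv.coe_fn_mk]
  rw [Finset.card_filter, Fintype.sum_prod_type]
  congr 1
  ext i
  rw [← Finset.card_filter]
  congr 1
  simp [Finset.filter_univ_mem]

lemma sum_fin2 : ∑ t : Finset (Fin 2),
    (if (0 : Fin 2) ∈ t ∨ (1 : Fin 2) ∈ t then (X : Polynomial ℤ) ^ t.card else 0)
    = 2 * X + X ^ 2 := by
  rw [show (univ : Finset (Finset (Fin 2))) = {∅, {0}, {1}, {0, 1}} from by decide]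
  rw [sum_insert (by decide), sum_insert (by decide), sum_insert (by decide), sum_singleton]
  norm_num
  ring

lemma pairs_sum (ι : Type*) [Fintype ι] [DecidableEq ι] :
    ∑ S : Finset (ι × Fin 2),
      (if ∀ i : ι, ((i, (0 : Fin 2)) ∈ S ∨ (i, (1 : Fin 2)) ∈ S)
        then (X : Polynomial ℤ) ^ S.card else 0)
    = (2 * X + X ^ 2) ^ Fintype.card ι := by
  rw [← Equiv.sum_comp (finsetProdEquiv ι)]
  have key : ∀ f : ι → Finset (Fin 2),
      (if ∀ i : ι, ((i, (0 : Fin 2)) ∈ finsetProdEquiv ι f ∨ (i, (1 : Fin 2)) ∈ finsetProdEquiv ι f)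
        then (X : Polynomial ℤ) ^ (finsetProdEquiv ι f).card else 0)
      = ∏ i, (if (0 : Fin 2) ∈ f i ∨ (1 : Fin 2) ∈ f i then (X : Polynomial ℤ) ^ (f i).card else 0) := by
    intro f
    rw [Fintype.prod_ite_zero, card_finsetProdEquiv]
    simp only [mem_finsetProdEquiv]
    rw [← Finset.prod_pow_eq_pow_sum]
  simp only [key]
  rw [← Fintype.piFinset_univ, ← Finset.prod_univ_sum (fun _ : ι => (univ : Finset (Finset (Fin 2))))
    (fun _ t => if (0 : Fin 2) ∈ t ∨ (1 : Fin 2) ∈ t then (X : Polynomial ℤ) ^ t.card else 0)]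
  simp only [sum_fin2, prod_const, card_univ]

lemma sum_pow_card (β : Type*) [Fintype β] [DecidableEq β] :
    ∑ S : Finset β, (X : Polynomial ℤ) ^ S.card = (1 + X) ^ Fintype.card β := by
  have h := Finset.prod_add (fun _ : β => (X : Polynomial ℤ)) (fun _ => 1) univ
  simp only [prod_const, prod_const_one, one_pow, mul_one, card_univ,
    Finset.powerset_univ] at h
  rw [add_comm]
  exact h.symm

lemma dominates_of_center {n : ℕ} {S : Finset (Fin 1 ⊕ Fin n × Fin 2)}
    (h : Sum.inl 0 ∈ S) : Dominates (friendship n) S := by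
  intro v hv
  refine ⟨Sum.inl 0, h, ?_⟩
  cases v with
  | inl a =>
    exact (hv (show Sum.inl a ∈ S by rwa [Subsingleton.elim a (0 : Fin 1)])).elim
  | inr p => trivial

lemma adj_pair {n : ℕ} (i : Fin n) (b b' : Fin 2) (h : b ≠ b') :
    (friendship n).Adj (Sum.inr (i, b)) (Sum.inr (i, b')) := ⟨rfl, h⟩

lemma dominates_iff {n : ℕ} (hn : 1 ≤ n) {S : Finset (Fin 1 ⊕ Fin n × Fin 2)}
    (h : Sum.inl 0 ∉ S) :
    Dominates (friendship n) S ↔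
      ∀ i : Fin n, Sum.inr (i, (0 : Fin 2)) ∈ S ∨ Sum.inr (i, (1 : Fin 2)) ∈ S := by
  constructor
  · intro hd i
    by_contra hc
    push_neg at hc
    obtain ⟨u, hu, hadj⟩ := hd (Sum.inr (i, 0)) hc.1
    cases u with
    | inl a => exact h (by rwa [Subsingleton.elim (0 : Fin 1) a])
    | inr q =>
      obtain ⟨j, b⟩ := q
      obtain ⟨h1, h2⟩ : j = i ∧ b ≠ 0 := hadj
      subst h1
      have : b = 1 := by omega
      subst this
      exact hc.2 hu
  · intro hc v hv
    cases v with
    | inl a =>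
      rcases hc ⟨0, hn⟩ with h0 | h1
      · exact ⟨_, h0, trivial⟩
      · exact ⟨_, h1, trivial⟩
    | inr p =>
      obtain ⟨i, b⟩ := p
      rcases hc i with h0 | h1
      · refine ⟨_, h0, ?_⟩
        have hb : b = 1 := by
          by_contra hb
          have : b = 0 := by omega
          subst this; exact hv h0
        subst hb
        exact adj_pair i 0 1 (by decide)
      · refine ⟨_, h1, ?_⟩
        have hb : b = 0 := by
          by_contra hb
          have : b = 1 := by omega
          subst this; exact hv h1
        subst hb
        exact adj_pair i 1 0 (by decide)

/-- The domination polynomial of the friendship graph `F_n`. -/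
theorem domPoly_friendship (n : ℕ) (hn : 1 ≤ n) :
    domPoly (friendship n) = (2 * X + X ^ 2) ^ n + X * (1 + X) ^ (2 * n) := by
  rw [domPoly, ← Equiv.sum_comp (finsetSumEquiv (α := Fin 1) (β := Fin n × Fin 2)),
    Fintype.sum_prod_type]
  rw [show (univ : Finset (Finset (Fin 1))) = {∅, {0}} from by decide]
  rw [sum_insert (by decide), sum_singleton]
  have hempty : ∀ B : Finset (Fin n × Fin 2),
      (@ite _ (Dominates (friendship n) (finsetSumEquiv ((∅ : Finset (Fin 1)), B)))
        (Classical.propDecidable _)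
        ((X : Polynomial ℤ) ^ (finsetSumEquiv ((∅ : Finset (Fin 1)), B)).card) 0)
      = (if ∀ i : Fin n, ((i, (0 : Fin 2)) ∈ B ∨ (i, (1 : Fin 2)) ∈ B)
        then (X : Polynomial ℤ) ^ B.card else 0) := by
    intro B
    have hc : Sum.inl (0 : Fin 1) ∉ (∅ : Finset (Fin 1)).disjSum B := by simp
    have hiff : Dominates (friendship n) (finsetSumEquiv ((∅ : Finset (Fin 1)), B)) ↔
        ∀ i : Fin n, ((i, (0 : Fin 2)) ∈ B ∨ (i, (1 : Fin 2)) ∈ B) := by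
      show Dominates (friendship n) ((∅ : Finset (Fin 1)).disjSum B) ↔ _
      rw [dominates_iff hn hc]
      simp [Finset.inr_mem_disjSum]
    have hcard : (finsetSumEquiv ((∅ : Finset (Fin 1)), B)).card = B.card := by
      show ((∅ : Finset (Fin 1)).disjSum B).card = B.card
      rw [Finset.card_disjSum, Finset.card_empty, zero_add]
    by_cases hd : ∀ i : Fin n, ((i, (0 : Fin 2)) ∈ B ∨ (i, (1 : Fin 2)) ∈ B)
    · rw [if_pos (hiff.mpr hd), if_pos hd, hcard]
    · rw [if_neg (fun hdom => hd (hiff.mp hdom)), if_neg hd]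
  have hfull : ∀ B : Finset (Fin n × Fin 2),
      (@ite _ (Dominates (friendship n) (finsetSumEquiv (({0} : Finset (Fin 1)), B)))
        (Classical.propDecidable _)
        ((X : Polynomial ℤ) ^ (finsetSumEquiv (({0} : Finset (Fin 1)), B)).card) 0)
      = X * (X : Polynomial ℤ) ^ B.card := by
    intro B
    have hc : Sum.inl (0 : Fin 1) ∈ finsetSumEquiv (({0} : Finset (Fin 1)), B) := by
      show Sum.inl (0 : Fin 1) ∈ ({0} : Finset (Fin 1)).disjSum B
      simp
    have hcard : (finsetSumEquiv (({0} : Finset (Fin 1)), B)).card = B.card + 1 := by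
      show (({0} : Finset (Fin 1)).disjSum B).card = B.card + 1
      rw [Finset.card_disjSum, Finset.card_singleton, add_comm]
    rw [if_pos (dominates_of_center hc), hcard, pow_succ, mul_comm]
  simp only [hempty, hfull]
  have hp : (∑ x : Finset (Fin n × Fin 2),
      if ∀ i : Fin n, ((i, (0 : Fin 2)) ∈ x ∨ (i, (1 : Fin 2)) ∈ x)
        then (X : Polynomial ℤ) ^ x.card else 0) = (2 * X + X ^ 2) ^ n := by
    have h2 := pairs_sum (Fin n)
    rw [Fintype.card_fin] at h2
    convert h2 using 2
    split_ifs <;> rfl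
  rw [hp, ← Finset.mul_sum, sum_pow_card]
  rw [Fintype.card_prod, Fintype.card_fin, Fintype.card_fin, mul_comm n 2]
end
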